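/- For the matrix $\hat{A}_{(3)}$ with columns $(1,0,0), (2,0,0), (2,0,1), (2,0,3), (2,0,4), (2,1,0), (2,1,1)$: the additive subgroup of $\mathbb{Z}^3$ generated by these columns is all of $\mathbb{Z}^3$, and the $3$-dimensional Lebesgue measure of the convex hull in $\mathbb{R}^3$ of the origin together with these seven points equals $5/3$; consequently the normalized volume $\operatorname{vol}_{\mathbb{Z}\hat{A}_{(3)}}(\hat{A}_{(3)}) = 3! \cdot (5/3) / 1 = 10$. -/

import Mathlib

open MeasureTheory

open Set

lemma auxVol2 (c : ℝ) (hc : 0 ≤ c) :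
    volume {p : ℝ × ℝ | 0 ≤ p.1 ∧ 0 ≤ p.2 ∧ p.1 + p.2 ≤ c} = ENNReal.ofReal (c ^ 2 / 2) := by
  have hms : MeasurableSet {p : ℝ × ℝ | 0 ≤ p.1 ∧ 0 ≤ p.2 ∧ p.1 + p.2 ≤ c} := by
    apply MeasurableSet.inter
    · exact measurableSet_le measurable_const measurable_fst
    apply MeasurableSet.inter
    · exact measurableSet_le measurable_const measurable_snd
    · exact measurableSet_le (measurable_fst.add measurable_snd) measurable_const
  rw [show (volume : Measure (ℝ × ℝ)) = (volume : Measure ℝ).prod volume from rfl,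
    Measure.prod_apply hms]
  have hslice : ∀ x : ℝ, (volume (Prod.mk x ⁻¹' {p : ℝ × ℝ | 0 ≤ p.1 ∧ 0 ≤ p.2 ∧ p.1 + p.2 ≤ c}))
      = Set.indicator (Icc 0 c) (fun x => ENNReal.ofReal (c - x)) x := by
    intro x
    by_cases hx : x ∈ Icc 0 c
    · rw [Set.indicator_of_mem hx]
      have : (Prod.mk x ⁻¹' {p : ℝ × ℝ | 0 ≤ p.1 ∧ 0 ≤ p.2 ∧ p.1 + p.2 ≤ c}) = Icc 0 (c - x) := by
        ext y; simp only [mem_preimage, mem_setOf_eq, mem_Icc]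
        constructor
        · rintro ⟨_, h2, h3⟩; exact ⟨h2, by linarith⟩
        · rintro ⟨h2, h3⟩; exact ⟨hx.1, h2, by linarith⟩
      rw [this, Real.volume_Icc]; ring_nf
    · rw [Set.indicator_of_notMem hx]
      have : (Prod.mk x ⁻¹' {p : ℝ × ℝ | 0 ≤ p.1 ∧ 0 ≤ p.2 ∧ p.1 + p.2 ≤ c}) = ∅ := by
        ext y; simp only [mem_preimage, mem_setOf_eq, mem_empty_iff_false, iff_false]
        rintro ⟨h1, h2, h3⟩
        simp only [mem_Icc, not_and_or, not_le] at hx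
        rcases hx with h | h
        · linarith
        · linarith
      rw [this, measure_empty]
  simp_rw [hslice]
  rw [lintegral_indicator measurableSet_Icc]
  rw [← ofReal_integral_eq_lintegral_ofReal]
  · rw [MeasureTheory.integral_Icc_eq_integral_Ioc, ← intervalIntegral.integral_of_le hc]
    congr 1
    have : ∫ x in (0:ℝ)..c, (c - x) = c * c - c ^ 2 / 2 := by
      rw [intervalIntegral.integral_sub intervalIntegrable_const
        (intervalIntegral.intervalIntegrable_id)]
      simp [integral_id]
    rw [this]; ring
  · exact (continuous_const.sub continuous_id).integrableOn_Icc
  · refine ae_restrict_of_forall_mem measurableSet_Icc fun x hx => ?_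
    simp only [Pi.zero_apply]
    linarith [hx.2]

lemma auxVol3 :
    volume {x : ℝ × ℝ × ℝ | 0 ≤ x.1 ∧ 0 ≤ x.2.1 ∧ 0 ≤ x.2.2 ∧ x.1 + x.2.1 + x.2.2 ≤ 1}
      = ENNReal.ofReal (1 / 6) := by
  have hms : MeasurableSet {x : ℝ × ℝ × ℝ | 0 ≤ x.1 ∧ 0 ≤ x.2.1 ∧ 0 ≤ x.2.2 ∧
      x.1 + x.2.1 + x.2.2 ≤ 1} := by
    apply MeasurableSet.inter
    · exact measurableSet_le measurable_const measurable_fst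
    apply MeasurableSet.inter
    · exact measurableSet_le measurable_const (measurable_snd.fst)
    apply MeasurableSet.inter
    · exact measurableSet_le measurable_const (measurable_snd.snd)
    · exact measurableSet_le (Measurable.add (measurable_fst.add measurable_snd.fst) measurable_snd.snd) measurable_const
  rw [show (volume : Measure (ℝ × ℝ × ℝ)) = (volume : Measure ℝ).prod volume from rfl,
    Measure.prod_apply hms]
  have hslice : ∀ x : ℝ, (volume (Prod.mk x ⁻¹' {x : ℝ × ℝ × ℝ | 0 ≤ x.1 ∧ 0 ≤ x.2.1 ∧
      0 ≤ x.2.2 ∧ x.1 + x.2.1 + x.2.2 ≤ 1}))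
      = Set.indicator (Icc 0 1) (fun x => ENNReal.ofReal ((1 - x) ^ 2 / 2)) x := by
    intro x
    by_cases hx : x ∈ Icc (0:ℝ) 1
    · rw [Set.indicator_of_mem hx]
      have he : (Prod.mk x ⁻¹' {x : ℝ × ℝ × ℝ | 0 ≤ x.1 ∧ 0 ≤ x.2.1 ∧ 0 ≤ x.2.2 ∧
          x.1 + x.2.1 + x.2.2 ≤ 1}) = {p : ℝ × ℝ | 0 ≤ p.1 ∧ 0 ≤ p.2 ∧ p.1 + p.2 ≤ 1 - x} := by
        ext p; simp only [mem_preimage, mem_setOf_eq]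
        constructor
        · rintro ⟨_, h2, h3, h4⟩; exact ⟨h2, h3, by linarith⟩
        · rintro ⟨h2, h3, h4⟩; exact ⟨hx.1, h2, h3, by linarith⟩
      rw [he, auxVol2 _ (by linarith [hx.2])]
    · rw [Set.indicator_of_notMem hx]
      have he : (Prod.mk x ⁻¹' {x : ℝ × ℝ × ℝ | 0 ≤ x.1 ∧ 0 ≤ x.2.1 ∧ 0 ≤ x.2.2 ∧
          x.1 + x.2.1 + x.2.2 ≤ 1}) = ∅ := by
        ext p; simp only [mem_preimage, mem_setOf_eq, mem_empty_iff_false, iff_false]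
        rintro ⟨h1, h2, h3, h4⟩
        simp only [mem_Icc, not_and_or, not_le] at hx
        rcases hx with h | h
        · linarith
        · linarith
      rw [he, measure_empty]
  simp_rw [hslice]
  rw [lintegral_indicator measurableSet_Icc, ← ofReal_integral_eq_lintegral_ofReal]
  · rw [MeasureTheory.integral_Icc_eq_integral_Ioc,
      ← intervalIntegral.integral_of_le (by norm_num : (0:ℝ) ≤ 1)]
    congr 1
    have h1 : ∫ x in (0:ℝ)..1, (1 - x) ^ 2 / 2 = (∫ x in (0:ℝ)..1, (1 - x) ^ 2) / 2 := by
      rw [intervalIntegral.integral_div]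
    have h2 : ∫ x in (0:ℝ)..1, (1 - x) ^ 2 = ∫ x in (0:ℝ)..1, x ^ 2 := by
      rw [intervalIntegral.integral_comp_sub_left (fun x => x ^ 2) 1]
      norm_num
    rw [h1, h2, integral_pow]
    norm_num
  · exact ((continuous_const.sub continuous_id).pow 2).div_const 2 |>.integrableOn_Icc
  · refine ae_restrict_of_forall_mem measurableSet_Icc fun x _ => ?_
    positivity

lemma auxVolT :
    volume {x : Fin 3 → ℝ | 0 ≤ x 0 ∧ 0 ≤ x 1 ∧ 0 ≤ x 2 ∧ x 0 + x 1 + x 2 ≤ 1}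
      = ENNReal.ofReal (1 / 6) := by
  have hms : MeasurableSet {x : ℝ × ℝ × ℝ | 0 ≤ x.1 ∧ 0 ≤ x.2.1 ∧ 0 ≤ x.2.2 ∧
      x.1 + x.2.1 + x.2.2 ≤ 1} := by
    apply MeasurableSet.inter
    · exact measurableSet_le measurable_const measurable_fst
    apply MeasurableSet.inter
    · exact measurableSet_le measurable_const (measurable_snd.fst)
    apply MeasurableSet.inter
    · exact measurableSet_le measurable_const (measurable_snd.snd)
    · exact measurableSet_le (Measurable.add (measurable_fst.add measurable_snd.fst)
        measurable_snd.snd) measurable_const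
  have mp1 := measurePreserving_piFinSuccAbove (fun _ : Fin 3 => (volume : Measure ℝ)) 0
  have mp2 := MeasurePreserving.prod (MeasurePreserving.id (volume : Measure ℝ))
    (volume_preserving_finTwoArrow ℝ)
  have hfun : (Prod.map id ⇑MeasurableEquiv.finTwoArrow) ∘
      ⇑(MeasurableEquiv.piFinSuccAbove (fun _ : Fin 3 => ℝ) 0)
      = fun x : Fin 3 → ℝ => (x 0, x 1, x 2) := by
    funext x
    simp [MeasurableEquiv.piFinSuccAbove, MeasurableEquiv.finTwoArrow, Prod.map,
      Fin.insertNthEquiv, Fin.succAbove]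
    exact ⟨rfl, rfl⟩
  have mp : MeasurePreserving
      (fun x : Fin 3 → ℝ => (x 0, x 1, x 2)) (volume : Measure (Fin 3 → ℝ))
      (volume : Measure (ℝ × ℝ × ℝ)) := hfun ▸ (mp2.comp mp1)
  have h2 := mp.measure_preimage hms.nullMeasurableSet
  have hset : {x : Fin 3 → ℝ | 0 ≤ x 0 ∧ 0 ≤ x 1 ∧ 0 ≤ x 2 ∧ x 0 + x 1 + x 2 ≤ 1}
      = (fun x : Fin 3 → ℝ => (x 0, x 1, x 2)) ⁻¹'
        {x : ℝ × ℝ × ℝ | 0 ≤ x.1 ∧ 0 ≤ x.2.1 ∧ 0 ≤ x.2.2 ∧ x.1 + x.2.1 + x.2.2 ≤ 1} := rfl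
  rw [hset, h2, auxVol3]

lemma auxT_eq : convexHull ℝ ({0, ![1,0,0], ![0,1,0], ![0,0,1]} : Set (Fin 3 → ℝ))
    = {x : Fin 3 → ℝ | 0 ≤ x 0 ∧ 0 ≤ x 1 ∧ 0 ≤ x 2 ∧ x 0 + x 1 + x 2 ≤ 1} := by
  apply Subset.antisymm
  · apply convexHull_min
    · intro p hp
      simp only [mem_insert_iff, mem_singleton_iff] at hp
      rcases hp with rfl | rfl | rfl | rfl <;> norm_num [mem_setOf_eq] <;> simp
    · intro x hx y hy a b ha hb hab
      obtain ⟨hx0, hx1, hx2, hxs⟩ := hx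
      obtain ⟨hy0, hy1, hy2, hys⟩ := hy
      have e : ∀ i, (a • x + b • y) i = a * x i + b * y i := fun i => rfl
      refine ⟨by rw [e]; positivity, by rw [e]; positivity, by rw [e]; positivity, ?_⟩
      rw [e, e, e]; nlinarith
  · intro x hx
    obtain ⟨h0, h1, h2, hs⟩ := hx
    apply mem_convexHull_of_exists_fintype
      (w := ![1 - (x 0 + x 1 + x 2), x 0, x 1, x 2])
      (z := ![0, ![1,0,0], ![0,1,0], ![0,0,1]])
    · intro i; fin_cases i <;> simp <;> linarith
    · simp [Fin.sum_univ_four]; ring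
    · intro i; fin_cases i <;> simp [mem_insert_iff]
    · funext i
      simp [Fin.sum_univ_four]
      fin_cases i <;> simp <;> ring
lemma auxVolSimplex (v₁ v₂ v₃ : Fin 3 → ℝ) :
    volume (convexHull ℝ ({0, v₁, v₂, v₃} : Set (Fin 3 → ℝ)))
      = ENNReal.ofReal (|(Matrix.of ![![v₁ 0, v₂ 0, v₃ 0], ![v₁ 1, v₂ 1, v₃ 1],
        ![v₁ 2, v₂ 2, v₃ 2]]).det| / 6) := by
  set M : Matrix (Fin 3) (Fin 3) ℝ := Matrix.of ![![v₁ 0, v₂ 0, v₃ 0], ![v₁ 1, v₂ 1, v₃ 1],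
    ![v₁ 2, v₂ 2, v₃ 2]] with hM
  set f : (Fin 3 → ℝ) →ₗ[ℝ] (Fin 3 → ℝ) := Matrix.toLin' M with hf
  have himg : f '' ({0, ![1,0,0], ![0,1,0], ![0,0,1]} : Set (Fin 3 → ℝ)) = {0, v₁, v₂, v₃} := by
    rw [image_insert_eq, image_insert_eq, image_insert_eq, image_singleton]
    congr 1
    · exact map_zero f
    congr 1
    · funext i; simp [hf, Matrix.toLin'_apply, Matrix.mulVec, dotProduct, hM,
        Fin.sum_univ_three]; fin_cases i <;> simp
    congr 1
    · funext i; simp [hf, Matrix.toLin'_apply, Matrix.mulVec, dotProduct, hM,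
        Fin.sum_univ_three]; fin_cases i <;> simp
    congr 1
    · funext i; simp [hf, Matrix.toLin'_apply, Matrix.mulVec, dotProduct, hM,
        Fin.sum_univ_three]; fin_cases i <;> simp
  have hch : convexHull ℝ ({0, v₁, v₂, v₃} : Set (Fin 3 → ℝ))
      = f '' (convexHull ℝ ({0, ![1,0,0], ![0,1,0], ![0,0,1]} : Set (Fin 3 → ℝ))) := by
    rw [← himg]
    exact (f.toAffineMap.image_convexHull _).symm
  rw [hch, Measure.addHaar_image_linearMap, auxT_eq, auxVolT, LinearMap.det_toLin',
    ← ENNReal.ofReal_mul (abs_nonneg _)]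
  ring_nf

lemma auxExistsWeights {n : ℕ} (v : Fin n → (Fin 3 → ℝ)) (p : Fin 3 → ℝ)
    (hp : p ∈ convexHull ℝ (Set.range v)) :
    ∃ w : Fin n → ℝ, (∀ i, 0 ≤ w i) ∧ ∑ i, w i = 1 ∧ ∑ i, w i • v i = p := by
  classical
  rw [convexHull_range_eq_exists_affineCombination] at hp
  obtain ⟨s, w, hw0, hw1, hx⟩ := hp
  refine ⟨fun i => if i ∈ s then w i else 0, fun i => ?_, ?_, ?_⟩
  · dsimp only; split
    · exact hw0 _ ‹_›
    · exact le_refl 0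
  · rw [Finset.sum_ite_mem, Finset.univ_inter]; exact hw1
  · rw [← hx, affineCombination_eq_centerMass hw1, Finset.centerMass_eq_of_sum_1 _ _ hw1]
    simp_rw [ite_smul, zero_smul]
    rw [Finset.sum_ite_mem, Finset.univ_inter]

lemma auxHull5Split :
    convexHull ℝ ({0, ![2,0,0], ![2,0,4], ![2,1,0], ![2,1,1]} : Set (Fin 3 → ℝ)) =
      convexHull ℝ ({0, ![2,0,0], ![2,1,0], ![2,1,1]} : Set (Fin 3 → ℝ)) ∪
      convexHull ℝ ({0, ![2,0,0], ![2,1,1], ![2,0,4]} : Set (Fin 3 → ℝ)) := by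
  apply Subset.antisymm
  · intro p hp
    have hrange : ({0, ![2,0,0], ![2,0,4], ![2,1,0], ![2,1,1]} : Set (Fin 3 → ℝ))
        = Set.range ![0, ![2,0,0], ![2,0,4], ![2,1,0], ![2,1,1]] := by
      ext x; simp [Matrix.range_cons, Matrix.range_empty]; tauto
    rw [hrange] at hp
    obtain ⟨w, hw0, hw1, hwp⟩ := auxExistsWeights _ _ hp
    rw [Fin.sum_univ_five] at hw1 hwp
    simp only [Matrix.cons_val_zero, Matrix.cons_val_one, Matrix.head_cons,
      Matrix.cons_val_two, Matrix.tail_cons, Matrix.cons_val_three, Matrix.cons_val_four] at hwp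
    by_cases hc : 4 * w 2 ≤ w 3
    · left
      apply mem_convexHull_of_exists_fintype
        (w := ![w 0, w 1 + w 2, w 3 - 4 * w 2, w 4 + 4 * w 2])
        (z := ![0, ![2,0,0], ![2,1,0], ![2,1,1]])
      · intro i; fin_cases i <;> simp <;> linarith [hw0 0, hw0 1, hw0 2, hw0 3, hw0 4]
      · simp [Fin.sum_univ_four]; linarith
      · intro i; fin_cases i <;> simp [mem_insert_iff]
      · rw [Fin.sum_univ_four, ← hwp]
        funext i
        fin_cases i <;>
          simp [Matrix.cons_val_zero, Matrix.cons_val_one, Matrix.head_cons] <;> ring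
    · right
      apply mem_convexHull_of_exists_fintype
        (w := ![w 0, w 1 + w 3 / 4, w 4 + w 3, w 2 - w 3 / 4])
        (z := ![0, ![2,0,0], ![2,1,1], ![2,0,4]])
      · intro i; fin_cases i <;> simp <;> linarith [hw0 0, hw0 1, hw0 2, hw0 3, hw0 4]
      · simp [Fin.sum_univ_four]; linarith
      · intro i; fin_cases i <;> simp [mem_insert_iff]
      · rw [Fin.sum_univ_four, ← hwp]
        funext i
        fin_cases i <;>
          simp [Matrix.cons_val_zero, Matrix.cons_val_one, Matrix.head_cons] <;> ring
  · apply union_subset <;> apply convexHull_mono <;> intro x hx <;>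
      simp only [mem_insert_iff, mem_singleton_iff] at hx ⊢ <;> tauto

lemma auxHull8Eq :
    convexHull ℝ ({![0, 0, 0], ![1, 0, 0], ![2, 0, 0], ![2, 0, 1], ![2, 0, 3],
        ![2, 0, 4], ![2, 1, 0], ![2, 1, 1]} : Set (Fin 3 → ℝ))
      = convexHull ℝ ({0, ![2,0,0], ![2,0,4], ![2,1,0], ![2,1,1]} : Set (Fin 3 → ℝ)) := by
  have h0 : (![0, 0, 0] : Fin 3 → ℝ) = 0 := by funext i; fin_cases i <;> rfl
  apply Subset.antisymm
  · apply convexHull_min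
    · have hconv := convex_convexHull ℝ ({0, ![2,0,0], ![2,0,4], ![2,1,0], ![2,1,1]} :
        Set (Fin 3 → ℝ))
      have m0 : (0 : Fin 3 → ℝ) ∈ convexHull ℝ ({0, ![2,0,0], ![2,0,4], ![2,1,0], ![2,1,1]} :
          Set (Fin 3 → ℝ)) := subset_convexHull _ _ (by simp)
      have mB : (![2,0,0] : Fin 3 → ℝ) ∈ convexHull ℝ ({0, ![2,0,0], ![2,0,4], ![2,1,0],
          ![2,1,1]} : Set (Fin 3 → ℝ)) := subset_convexHull _ _ (by simp)
      have mE : (![2,0,4] : Fin 3 → ℝ) ∈ convexHull ℝ ({0, ![2,0,0], ![2,0,4], ![2,1,0],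
          ![2,1,1]} : Set (Fin 3 → ℝ)) := subset_convexHull _ _ (by simp)
      intro x hx
      simp only [mem_insert_iff, mem_singleton_iff] at hx
      rcases hx with rfl | rfl | rfl | rfl | rfl | rfl | rfl | rfl
      · rw [h0]; exact m0
      · have : (![1,0,0] : Fin 3 → ℝ) = (1/2 : ℝ) • (0 : Fin 3 → ℝ) + (1/2 : ℝ) • ![2,0,0] := by
          funext i; fin_cases i <;> norm_num
        rw [this]; exact hconv m0 mB (by norm_num) (by norm_num) (by norm_num)
      · exact mB
      · have : (![2,0,1] : Fin 3 → ℝ) = (3/4 : ℝ) • (![2,0,0] : Fin 3 → ℝ)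
            + (1/4 : ℝ) • ![2,0,4] := by funext i; fin_cases i <;> norm_num
        rw [this]; exact hconv mB mE (by norm_num) (by norm_num) (by norm_num)
      · have : (![2,0,3] : Fin 3 → ℝ) = (1/4 : ℝ) • (![2,0,0] : Fin 3 → ℝ)
            + (3/4 : ℝ) • ![2,0,4] := by funext i; fin_cases i <;> norm_num
        rw [this]; exact hconv mB mE (by norm_num) (by norm_num) (by norm_num)
      · exact mE
      · exact subset_convexHull _ _ (by simp [mem_insert_iff, mem_singleton_iff])
      · exact subset_convexHull _ _ (by simp [mem_insert_iff, mem_singleton_iff])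
    · exact convex_convexHull _ _
  · apply convexHull_mono
    rw [← h0]
    intro x hx
    simp only [mem_insert_iff, mem_singleton_iff] at hx ⊢
    tauto

lemma auxVolumeHull8 :
    volume (convexHull ℝ ({![0, 0, 0], ![1, 0, 0], ![2, 0, 0], ![2, 0, 1], ![2, 0, 3],
        ![2, 0, 4], ![2, 1, 0], ![2, 1, 1]} : Set (Fin 3 → ℝ))) = 5 / 3 := by
  rw [auxHull8Eq, auxHull5Split]
  set S1 := convexHull ℝ ({0, ![2,0,0], ![2,1,0], ![2,1,1]} : Set (Fin 3 → ℝ)) with hS1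
  set S2 := convexHull ℝ ({0, ![2,0,0], ![2,1,1], ![2,0,4]} : Set (Fin 3 → ℝ)) with hS2
  have hS2m : MeasurableSet S2 := by
    have : IsCompact S2 := (Set.toFinite _).isCompact_convexHull ℝ
    exact this.isClosed.measurableSet
  have hinter : volume (S1 ∩ S2) = 0 := by
    set l : (Fin 3 → ℝ) →ₗ[ℝ] ℝ :=
      { toFun := fun x => x 1 - x 2
        map_add' := fun x y => by simp [Pi.add_apply]; ring
        map_smul' := fun c x => by simp [Pi.smul_apply, smul_eq_mul]; ring } with hl
    have hsub : S1 ∩ S2 ⊆ (LinearMap.ker l : Submodule ℝ (Fin 3 → ℝ)) := by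
      have hhs1 : S1 ⊆ {x : Fin 3 → ℝ | x 2 ≤ x 1} := by
        apply convexHull_min
        · intro x hx
          simp only [mem_insert_iff, mem_singleton_iff] at hx
          rcases hx with rfl | rfl | rfl | rfl <;> norm_num [mem_setOf_eq] <;> simp
        · intro x hx y hy a b ha hb hab
          have e : ∀ i, (a • x + b • y) i = a * x i + b * y i := fun i => rfl
          simp only [mem_setOf_eq] at hx hy ⊢
          rw [e, e]; nlinarith
      have hhs2 : S2 ⊆ {x : Fin 3 → ℝ | x 1 ≤ x 2} := by
        apply convexHull_min
        · intro x hx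
          simp only [mem_insert_iff, mem_singleton_iff] at hx
          rcases hx with rfl | rfl | rfl | rfl <;> norm_num [mem_setOf_eq] <;> simp
        · intro x hx y hy a b ha hb hab
          have e : ∀ i, (a • x + b • y) i = a * x i + b * y i := fun i => rfl
          simp only [mem_setOf_eq] at hx hy ⊢
          rw [e, e]; nlinarith
      rintro x ⟨h1, h2⟩
      have := hhs1 h1
      have := hhs2 h2
      simp only [SetLike.mem_coe, LinearMap.mem_ker, hl, LinearMap.coe_mk, AddHom.coe_mk]
      simp only [mem_setOf_eq] at *
      linarith
    refine measure_mono_null hsub (Measure.addHaar_submodule _ _ ?_)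
    intro htop
    have : (![2,1,0] : Fin 3 → ℝ) ∈ LinearMap.ker l := htop ▸ Submodule.mem_top
    simp [LinearMap.mem_ker, hl] at this
  have hvol1 : volume S1 = ENNReal.ofReal (1 / 3) := by
    rw [hS1, auxVolSimplex]
    congr 1
    rw [Matrix.det_fin_three]
    simp [Matrix.vecHead, Matrix.vecTail]
    norm_num
  have hvol2 : volume S2 = ENNReal.ofReal (4 / 3) := by
    rw [hS2, auxVolSimplex]
    congr 1
    rw [Matrix.det_fin_three]
    simp [Matrix.vecHead, Matrix.vecTail]
    norm_num
  have := measure_union_add_inter (μ := volume) S1 hS2m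
  rw [hinter, add_zero, hvol1, hvol2] at this
  rw [this, ← ENNReal.ofReal_add (by norm_num) (by norm_num)]
  rw [show (1:ℝ)/3 + 4/3 = 5/3 by norm_num]
  rw [ENNReal.ofReal_div_of_pos (by norm_num)]
  norm_num

lemma auxClosureTop :
    (AddSubgroup.closure ({![1, 0, 0], ![2, 0, 0], ![2, 0, 1], ![2, 0, 3], ![2, 0, 4],
        ![2, 1, 0], ![2, 1, 1]} : Set (Fin 3 → ℤ)) = ⊤) := by
  set S : Set (Fin 3 → ℤ) := {![1, 0, 0], ![2, 0, 0], ![2, 0, 1], ![2, 0, 3], ![2, 0, 4],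
    ![2, 1, 0], ![2, 1, 1]} with hS
  rw [eq_top_iff]
  rintro x -
  have h1 : (![1,0,0] : Fin 3 → ℤ) ∈ AddSubgroup.closure S :=
    AddSubgroup.subset_closure (by simp [hS])
  have h2 : (![2,0,0] : Fin 3 → ℤ) ∈ AddSubgroup.closure S :=
    AddSubgroup.subset_closure (by simp [hS])
  have h3 : (![2,0,1] : Fin 3 → ℤ) ∈ AddSubgroup.closure S :=
    AddSubgroup.subset_closure (by simp [hS])
  have h6 : (![2,1,0] : Fin 3 → ℤ) ∈ AddSubgroup.closure S :=
    AddSubgroup.subset_closure (by simp [hS])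
  have he1 : (![0,1,0] : Fin 3 → ℤ) ∈ AddSubgroup.closure S := by
    have := AddSubgroup.sub_mem _ h6 h2
    have heq : (![2,1,0] : Fin 3 → ℤ) - ![2,0,0] = ![0,1,0] := by
      funext i; fin_cases i <;> rfl
    rwa [heq] at this
  have he2 : (![0,0,1] : Fin 3 → ℤ) ∈ AddSubgroup.closure S := by
    have := AddSubgroup.sub_mem _ h3 h2
    have heq : (![2,0,1] : Fin 3 → ℤ) - ![2,0,0] = ![0,0,1] := by
      funext i; fin_cases i <;> rfl
    rwa [heq] at this
  have hx : x = x 0 • ![1,0,0] + x 1 • ![0,1,0] + x 2 • ![0,0,1] := by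
    funext i; fin_cases i <;> simp
  rw [hx]
  exact AddSubgroup.add_mem _ (AddSubgroup.add_mem _ (AddSubgroup.zsmul_mem _ h1 _)
    (AddSubgroup.zsmul_mem _ he1 _)) (AddSubgroup.zsmul_mem _ he2 _)

lemma auxRangeInt : (Set.range fun (j : Fin 7) (i : Fin 3) =>
      (Matrix.of !![1, 2, 2, 2, 2, 2, 2; 0, 0, 0, 0, 0, 1, 1; 0, 0, 1, 3, 4, 0, 1]) i j)
    = ({![1, 0, 0], ![2, 0, 0], ![2, 0, 1], ![2, 0, 3], ![2, 0, 4],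
        ![2, 1, 0], ![2, 1, 1]} : Set (Fin 3 → ℤ)) := by
  ext x
  simp only [mem_range, mem_insert_iff, mem_singleton_iff]
  constructor
  · rintro ⟨j, rfl⟩
    fin_cases j
    · exact Or.inl (by funext i; fin_cases i <;> rfl)
    · exact Or.inr (Or.inl (by funext i; fin_cases i <;> rfl))
    · exact Or.inr (Or.inr (Or.inl (by funext i; fin_cases i <;> rfl)))
    · exact Or.inr (Or.inr (Or.inr (Or.inl (by funext i; fin_cases i <;> rfl))))
    · exact Or.inr (Or.inr (Or.inr (Or.inr (Or.inl (by funext i; fin_cases i <;> rfl)))))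
    · exact Or.inr (Or.inr (Or.inr (Or.inr (Or.inr (Or.inl
        (by funext i; fin_cases i <;> rfl))))))
    · exact Or.inr (Or.inr (Or.inr (Or.inr (Or.inr (Or.inr
        (by funext i; fin_cases i <;> rfl))))))
  · rintro (rfl | rfl | rfl | rfl | rfl | rfl | rfl)
    · exact ⟨0, by funext i; fin_cases i <;> rfl⟩
    · exact ⟨1, by funext i; fin_cases i <;> rfl⟩
    · exact ⟨2, by funext i; fin_cases i <;> rfl⟩
    · exact ⟨3, by funext i; fin_cases i <;> rfl⟩
    · exact ⟨4, by funext i; fin_cases i <;> rfl⟩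
    · exact ⟨5, by funext i; fin_cases i <;> rfl⟩
    · exact ⟨6, by funext i; fin_cases i <;> rfl⟩

lemma auxRangeReal : insert (0 : Fin 3 → ℝ) (Set.range fun (j : Fin 7) (i : Fin 3) =>
      (((Matrix.of !![1, 2, 2, 2, 2, 2, 2; 0, 0, 0, 0, 0, 1, 1; 0, 0, 1, 3, 4, 0, 1]) i j : ℤ) : ℝ))
    = ({![0, 0, 0], ![1, 0, 0], ![2, 0, 0], ![2, 0, 1], ![2, 0, 3],
        ![2, 0, 4], ![2, 1, 0], ![2, 1, 1]} : Set (Fin 3 → ℝ)) := by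
  have h0 : (![0, 0, 0] : Fin 3 → ℝ) = 0 := by funext i; fin_cases i <;> rfl
  rw [h0]
  congr 1
  have hcomp : (fun (j : Fin 7) (i : Fin 3) =>
        (((Matrix.of !![1, 2, 2, 2, 2, 2, 2; 0, 0, 0, 0, 0, 1, 1;
          0, 0, 1, 3, 4, 0, 1]) i j : ℤ) : ℝ))
      = (fun (v : Fin 3 → ℤ) (i : Fin 3) => ((v i : ℤ) : ℝ)) ∘ (fun (j : Fin 7) (i : Fin 3) =>
        (Matrix.of !![1, 2, 2, 2, 2, 2, 2; 0, 0, 0, 0, 0, 1, 1; 0, 0, 1, 3, 4, 0, 1]) i j) := rfl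
  rw [hcomp, Set.range_comp, auxRangeInt]
  rw [image_insert_eq, image_insert_eq, image_insert_eq, image_insert_eq, image_insert_eq,
    image_insert_eq, image_singleton]
  congr 1
  · funext i; fin_cases i <;> norm_num
  congr 1
  · funext i; fin_cases i <;> norm_num
  congr 1
  · funext i; fin_cases i <;> norm_num
  congr 1
  · funext i; fin_cases i <;> norm_num
  congr 1
  · funext i; fin_cases i <;> norm_num
  congr 1
  · funext i; fin_cases i <;> norm_num
  · congr 1; funext i; fin_cases i <;> norm_num

/-- The normalized volume of an integer matrix `A`: `d! · λ_d(Δ_A) / [ℤ^d : ℤA]`. -/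
noncomputable def normVol {ι κ : Type*} [Fintype ι] [Fintype κ] (A : Matrix ι κ ℤ) : ℝ :=
  (Nat.factorial (Fintype.card ι) : ℝ) *
    (volume (convexHull ℝ
      (insert (0 : ι → ℝ) (Set.range fun j i => (A i j : ℝ))))).toReal /
    ((AddSubgroup.closure (Set.range fun j i => A i j) : AddSubgroup (ι → ℤ)).index : ℝ)

/-- For `Â₍₃₎` with columns `(1,0,0), (2,0,0), (2,0,1), (2,0,3), (2,0,4), (2,1,0), (2,1,1)`:
the columns generate `ℤ³` as a group, the convex hull of the origin and the columns has
volume `5/3`, and the normalized volume is `3! · (5/3) / 1 = 10`. -/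
theorem normVol_A_hat_three :
    (AddSubgroup.closure ({![1, 0, 0], ![2, 0, 0], ![2, 0, 1], ![2, 0, 3], ![2, 0, 4],
        ![2, 1, 0], ![2, 1, 1]} : Set (Fin 3 → ℤ)) = ⊤) ∧
    volume (convexHull ℝ ({![0, 0, 0], ![1, 0, 0], ![2, 0, 0], ![2, 0, 1], ![2, 0, 3],
        ![2, 0, 4], ![2, 1, 0], ![2, 1, 1]} : Set (Fin 3 → ℝ))) = 5 / 3 ∧
    normVol (Matrix.of !![1, 2, 2, 2, 2, 2, 2; 0, 0, 0, 0, 0, 1, 1; 0, 0, 1, 3, 4, 0, 1])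
      = 10 := by
  refine ⟨auxClosureTop, auxVolumeHull8, ?_⟩
  unfold normVol
  rw [auxRangeInt, auxClosureTop, AddSubgroup.index_top, auxRangeReal, auxVolumeHull8]
  norm_num [Nat.factorial, ENNReal.toReal_div]
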